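/- arXiv:1611.10081 — 2 statements merged into one kernel-verified Lean document; each statement's English description precedes it below -/
import Mathlib

section
/- For every R > 0: j_0(R) < 0; j_1(R) = 0; and for every integer k ≥ 2, 0 < j_k(R) < 1. Here j_k(R) := 1 − 3·I_{3/2}(R)/(R·I_{1/2}(R)) − I_{3/2}(R)·I_{k+3/2}(R)/(I_{1/2}(R)·I_{k+1/2}(R)). -/
/-- The modified Bessel function of the first kind of order `m`:
`I_m(r) = ∑ (r/2)^(m+2n) / (n! Γ(m+n+1))`. -/
noncomputable def besselI (m r : ℝ) : ℝ :=
  ∑' n : ℕ, (r / 2) ^ (m + 2 * (n : ℝ)) / ((n.factorial : ℝ) * Real.Gamma (m + (n : ℝ) + 1))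

/-- `h_k(R) = ((k²+k)/2 - 1)·I_{k+3/2}(R)/(R·I_{k+1/2}(R))`. -/
noncomputable def hfun (k : ℕ) (R : ℝ) : ℝ :=
  (((k : ℝ) ^ 2 + k) / 2 - 1) * (besselI ((k : ℝ) + 3 / 2) R / (R * besselI ((k : ℝ) + 1 / 2) R))

/-- `j_k(R) = 1 - 3 I_{3/2}(R)/(R I_{1/2}(R)) - I_{3/2}(R) I_{k+3/2}(R)/(I_{1/2}(R) I_{k+1/2}(R))`. -/
noncomputable def jfun (k : ℕ) (R : ℝ) : ℝ :=
  1 - 3 * besselI (3 / 2) R / (R * besselI (1 / 2) R)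
    - besselI (3 / 2) R * besselI ((k : ℝ) + 3 / 2) R
      / (besselI (1 / 2) R * besselI ((k : ℝ) + 1 / 2) R)

lemma gamma_fact_le (m : ℝ) (hm : 0 ≤ m) (n : ℕ) :
    (n.factorial : ℝ) * Real.Gamma (m + 1) ≤ Real.Gamma (m + n + 1) := by
  induction n with
  | zero => simp
  | succ n ih =>
    have h1 : m + ((n:ℕ) + 1 : ℕ) + 1 = (m + n + 1) + 1 := by push_cast; ring
    have h0 : Real.Gamma ((m + n + 1) + 1) = (m + n + 1) * Real.Gamma (m + n + 1) :=
      Real.Gamma_add_one (by positivity)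
    rw [h1, h0]
    have hΓ : 0 < Real.Gamma (m + n + 1) := Real.Gamma_pos_of_pos (by positivity)
    have h2 : ((n+1 : ℕ) : ℝ) ≤ m + n + 1 := by push_cast; linarith
    have h3 : ((n+1).factorial : ℝ) = ((n+1:ℕ) : ℝ) * (n.factorial : ℝ) := by
      push_cast [Nat.factorial_succ]; ring
    have hΓ1 : 0 < Real.Gamma (m+1) := Real.Gamma_pos_of_pos (by linarith)
    nlinarith [mul_le_mul_of_nonneg_left ih (show (0:ℝ) ≤ ((n+1:ℕ):ℝ) by positivity)]

lemma besselI_term_pos (m r : ℝ) (hm : 0 ≤ m) (hr : 0 < r) (n : ℕ) :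
    0 < (r / 2) ^ (m + 2 * (n : ℝ)) / ((n.factorial : ℝ) * Real.Gamma (m + (n : ℝ) + 1)) := by
  have h1 : (0:ℝ) < (r/2) ^ (m + 2*(n:ℝ)) := Real.rpow_pos_of_pos (by linarith) _
  have h2 : (0:ℝ) < Real.Gamma (m + n + 1) := Real.Gamma_pos_of_pos (by positivity)
  have h3 : (0:ℝ) < (n.factorial : ℝ) := by positivity
  positivity

lemma besselI_summable (m r : ℝ) (hm : 0 ≤ m) (hr : 0 < r) :
    Summable (fun n : ℕ =>
      (r / 2) ^ (m + 2 * (n : ℝ)) / ((n.factorial : ℝ) * Real.Gamma (m + (n : ℝ) + 1))) := by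
  have hx : 0 < r/2 := by linarith
  have hΓ1 : 0 < Real.Gamma (m+1) := Real.Gamma_pos_of_pos (by linarith)
  refine Summable.of_nonneg_of_le (fun n => (besselI_term_pos m r hm hr n).le) ?_
    (((Real.summable_pow_div_factorial (((r/2)^2 : ℝ))).mul_left ((r/2) ^ m / Real.Gamma (m+1))))
  intro n
  set x := r/2 with hxdef
  have hsplit : x ^ (m + 2*(n:ℝ)) = x ^ m * (x^2)^n := by
    rw [Real.rpow_add hx, show (2*(n:ℝ)) = ((2*n : ℕ):ℝ) by push_cast; ring,
      Real.rpow_natCast, pow_mul]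
  rw [hsplit]
  have hΓ : (n.factorial : ℝ) * Real.Gamma (m+1) ≤ Real.Gamma (m + n + 1) :=
    gamma_fact_le m hm n
  have hfac : (1:ℝ) ≤ (n.factorial : ℝ) := by
    exact_mod_cast Nat.one_le_iff_ne_zero.mpr n.factorial_ne_zero
  have hΓpos : 0 < Real.Gamma (m + n + 1) := Real.Gamma_pos_of_pos (by positivity)
  have hxm : 0 < x ^ m := Real.rpow_pos_of_pos hx m
  have hx2n : (0:ℝ) ≤ (x^2)^n := by positivity
  rw [div_mul_div_comm]
  exact div_le_div_of_nonneg_left (by positivity) (by positivity) (by nlinarith)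

lemma besselI_pos (m r : ℝ) (hm : 0 ≤ m) (hr : 0 < r) : 0 < besselI m r :=
  Summable.tsum_pos (besselI_summable m r hm hr) (fun n => (besselI_term_pos m r hm hr n).le) 0
    (besselI_term_pos m r hm hr 0)

lemma besselI_rec (m r : ℝ) (hm : 0 ≤ m) (hr : 0 < r) :
    besselI m r = besselI (m+2) r + (2*(m+1)/r) * besselI (m+1) r := by
  have hx : (0:ℝ) < r/2 := by linarith
  set x := r/2 with hxdef
  set c : ℕ → ℝ := fun n => (m+1) * x ^ (m + 2*(n:ℝ)) / ((n.factorial : ℝ) * Real.Gamma (m + n + 2)) with hc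
  have hscale : (2*(m+1)/r) * besselI (m+1) r = ∑' n : ℕ, c n := by
    rw [besselI, ← tsum_mul_left]
    congr 1; funext n
    have he : x ^ (m + 1 + 2*(n:ℝ)) = x ^ (m + 2*(n:ℝ)) * x := by
      rw [← Real.rpow_add_one (ne_of_gt hx)]; ring_nf
    have he2 : m + 1 + (n:ℝ) + 1 = m + n + 2 := by ring
    rw [he, he2, hc]
    field_simp
    ring
  have hcs : Summable c := by
    have := (besselI_summable (m+1) r (by linarith) hr).mul_left (2*(m+1)/r)
    have heq : (fun n : ℕ => (2*(m+1)/r) * ((r/2) ^ (m+1 + 2*(n:ℝ)) / ((n.factorial : ℝ) * Real.Gamma (m+1 + n + 1)))) = c := by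
      funext n
      have he : x ^ (m + 1 + 2*(n:ℝ)) = x ^ (m + 2*(n:ℝ)) * x := by
        rw [← Real.rpow_add_one (ne_of_gt hx)]; ring_nf
      have he2 : m + 1 + (n:ℝ) + 1 = m + n + 2 := by ring
      rw [hc]; dsimp only
      rw [← hxdef, he, he2]
      field_simp
      ring
    rwa [heq] at this
  have hsub : besselI m r - (2*(m+1)/r) * besselI (m+1) r
      = ∑' n : ℕ, (x ^ (m + 2*(n:ℝ)) / ((n.factorial : ℝ) * Real.Gamma (m + n + 1)) - c n) := by
    rw [hscale, besselI, ← Summable.tsum_sub (besselI_summable m r hm hr) hcs]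
  set g : ℕ → ℝ := fun n => x ^ (m + 2*(n:ℝ)) / ((n.factorial : ℝ) * Real.Gamma (m + n + 1)) - c n with hg
  have hgs : Summable g := (besselI_summable m r hm hr).sub hcs
  have hg0 : g 0 = 0 := by
    rw [hg, hc]; dsimp only
    have : Real.Gamma (m + (0:ℕ) + 2) = (m+1) * Real.Gamma (m + (0:ℕ) + 1) := by
      have := Real.Gamma_add_one (s := m+1) (by positivity)
      push_cast
      rw [show m + 0 + 2 = (m+1)+1 by ring, this, show m + 0 + 1 = m + 1 by ring]
    rw [this]
    have hΓ : 0 < Real.Gamma (m + (0:ℕ) + 1) := Real.Gamma_pos_of_pos (by positivity)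
    field_simp
    ring
  have hgsucc : ∀ n : ℕ, g (n+1) = (r/2) ^ (m + 2 + 2*(n:ℝ)) / ((n.factorial : ℝ) * Real.Gamma (m + 2 + n + 1)) := by
    intro n
    rw [hg, hc]; dsimp only
    have hΓ1 : Real.Gamma (m + (n+1:ℕ) + 2) = (m + n + 2) * Real.Gamma (m + (n+1:ℕ) + 1) := by
      have := Real.Gamma_add_one (s := m + n + 2) (by positivity)
      push_cast
      rw [show m + ((n:ℝ)+1) + 2 = (m + n + 2)+1 by ring, this, show m + ((n:ℝ)+1) + 1 = m + n + 2 by ring]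
    have hΓ2 : Real.Gamma (m + (n+1:ℕ) + 1) = (m + n + 1) * Real.Gamma (m + (n:ℕ) + 1) := by
      have := Real.Gamma_add_one (s := m + n + 1) (by positivity)
      push_cast
      rw [show m + ((n:ℝ)+1) + 1 = (m + n + 1)+1 by ring, this]
    have hxe : x ^ (m + 2*((n+1:ℕ):ℝ)) = x ^ (m + 2*(n:ℝ)) * x^(2:ℝ) := by
      rw [← Real.rpow_add hx]; push_cast; ring_nf
    have hxe2 : x ^ (m + 2 + 2*(n:ℝ)) = x ^ (m + 2*(n:ℝ)) * x^(2:ℝ) := by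
      rw [← Real.rpow_add hx]; ring_nf
    have hΓ3 : Real.Gamma (m + 2 + n + 1) = (m+n+2) * ((m+n+1) * Real.Gamma (m + n + 1)) := by
      have h1 := Real.Gamma_add_one (s := m + n + 2) (by positivity)
      have h2 := Real.Gamma_add_one (s := m + n + 1) (by positivity)
      rw [show m + 2 + (n:ℝ) + 1 = (m + n + 2)+1 by ring, h1, show m + (n:ℝ) + 2 = (m+n+1)+1 by ring, h2]
    have hfac : ((n+1).factorial : ℝ) = (n+1) * (n.factorial : ℝ) := by
      push_cast [Nat.factorial_succ]; ring
    rw [← hxdef, hxe, hxe2, hΓ1, hΓ2, hΓ3, hfac]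
    have hΓpos : 0 < Real.Gamma (m + (n:ℝ) + 1) := Real.Gamma_pos_of_pos (by positivity)
    have hfp : (0:ℝ) < (n.factorial : ℝ) := by positivity
    push_cast
    field_simp
    ring
  have hfinal : ∑' n, g n = besselI (m+2) r := by
    rw [Summable.tsum_eq_zero_add hgs, hg0, zero_add, besselI]
    congr 1; funext n
    rw [hgsucc n]
  rw [hfinal] at hsub
  linarith

noncomputable def bY (m r : ℝ) : ℝ := r * besselI (m+1) r / besselI m r

lemma bY_pos (m r : ℝ) (hm : 0 ≤ m) (hr : 0 < r) : 0 < bY m r := by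
  have h1 := besselI_pos m r hm hr
  have h2 := besselI_pos (m+1) r (by linarith) hr
  unfold bY; positivity

lemma bY_eq (m r : ℝ) (hm : 0 ≤ m) (hr : 0 < r) :
    bY m r * (2*(m+1) + bY (m+1) r) = r^2 := by
  have h0 := besselI_pos m r hm hr
  have h1 := besselI_pos (m+1) r (by linarith) hr
  have h2 := besselI_pos (m+2) r (by linarith) hr
  have hrec := besselI_rec m r hm hr
  have hrec' : r * besselI m r = r * besselI (m+2) r + 2*(m+1)*besselI (m+1) r := by
    rw [hrec]; field_simp
  unfold bY
  rw [show m+1+1 = m+2 by ring]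
  field_simp
  linear_combination (-1:ℝ) * hrec'


lemma bY_mul_lt (m r : ℝ) (hm : 0 ≤ m) (hr : 0 < r) :
    bY m r * bY (m+1) r < r^2 := by
  have h0 := besselI_pos m r hm hr
  have h1 := besselI_pos (m+1) r (by linarith) hr
  have h2 := besselI_pos (m+2) r (by linarith) hr
  have hrec := besselI_rec m r hm hr
  have hlt : besselI (m+2) r < besselI m r := by
    have : 0 < (2*(m+1)/r) * besselI (m+1) r := by positivity
    linarith
  unfold bY
  rw [show m+1+1 = m+2 by ring]
  rw [div_mul_div_comm]
  rw [div_lt_iff₀ (by positivity)]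
  calc r * besselI (m+1) r * (r * besselI (m+2) r) = r^2 * (besselI (m+2) r * besselI (m+1) r) := by ring
    _ < r^2 * (besselI m r * besselI (m+1) r) := by
        apply mul_lt_mul_of_pos_left _ (by positivity)
        exact mul_lt_mul_of_pos_right hlt h1
    _ = r^2 * (besselI m r * besselI (m+1) r) := rfl

lemma bY_le (m r : ℝ) (hm : 0 ≤ m) (hr : 0 < r) : bY m r * (2*(m+1)) ≤ r^2 := by
  have h := bY_eq m r hm hr
  have h1 := (bY_pos (m+1) r (by linarith) hr).le
  have h2 := (bY_pos m r hm hr).le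
  nlinarith

lemma bY_key (r : ℝ) (hr : 0 < r) : ∀ n : ℕ, ∀ m : ℝ, 0 ≤ m → r^2 ≤ 2*(m+n+1) →
    bY (m+1) r < bY m r ∧ bY m r - bY (m+1) r < 2 := by
  intro n
  induction n with
  | zero =>
    intro m hm hrn
    push_cast at hrn
    have hm1 : (0:ℝ) ≤ m+1 := by linarith
    have hm2 : (0:ℝ) ≤ m+2 := by linarith
    have hY0 := bY_pos m r hm hr
    have hY1 := bY_pos (m+1) r hm1 hr
    have hY2 := bY_pos (m+2) r hm2 hr
    have he0 := bY_eq m r hm hr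
    have he1 := bY_eq (m+1) r hm1 hr
    rw [show m+1+1 = m+2 by ring] at he1
    have hb1 : bY (m+1) r * (2*(m+2)) ≤ r^2 := by
      have h := bY_le (m+1) r hm1 hr
      rw [show m+1+1 = m+2 from by ring] at h; exact h
    have hY1lt : bY (m+1) r < 1 := by nlinarith
    have hY0le : bY m r ≤ 1 := by
      have := bY_le m r hm hr
      nlinarith
    constructor
    · -- bY m * (2(m+1)+Y1) = bY (m+1) * (2(m+2)+Y2), denominators compare
      nlinarith [he0, he1]
    · nlinarith
  | succ n ih =>
    intro m hm hrn
    push_cast at hrn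
    have hm1 : (0:ℝ) ≤ m+1 := by linarith
    obtain ⟨hlt, hub⟩ := ih (m+1) hm1 (by push_cast; linarith)
    rw [show m+1+1 = m+2 by ring] at hlt hub
    have hY0 := bY_pos m r hm hr
    have hY1 := bY_pos (m+1) r hm1 hr
    have hY2 := bY_pos (m+2) r (by linarith) hr
    have he0 := bY_eq m r hm hr
    have he1 := bY_eq (m+1) r hm1 hr
    rw [show m+1+1 = m+2 by ring] at he1
    set A := 2*(m+1) + bY (m+1) r with hA
    set B := 2*(m+2) + bY (m+2) r with hB
    have hApos : 0 < A := by rw [hA]; positivity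
    have hBpos : 0 < B := by rw [hB]; positivity
    have hAB : A < B := by rw [hA, hB]; linarith
    have hprod := bY_mul_lt m r hm hr
    constructor
    · nlinarith
    · have hABr : r^2 < A*B := by nlinarith
      have h2 : (bY m r - bY (m+1) r)*(A*B) = r^2*(B-A) := by nlinarith
      nlinarith




lemma bY_step (r : ℝ) (hr : 0 < r) (m : ℝ) (hm : 0 ≤ m) : bY (m+1) r < bY m r := by
  obtain ⟨n, hn⟩ := exists_nat_ge (r^2/2)
  exact (bY_key r hr n m hm (by linarith)).1

lemma bY_chain (r : ℝ) (hr : 0 < r) : ∀ j : ℕ, ∀ m : ℝ, 0 ≤ m →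
    bY (m + j + 1) r < bY m r := by
  intro j
  induction j with
  | zero =>
    intro m hm
    have := bY_step r hr m hm
    simpa using this
  | succ j ih =>
    intro m hm
    have e : m + ((j+1 : ℕ):ℝ) + 1 = (m+1) + (j:ℝ) + 1 := by push_cast; ring
    rw [e]
    exact lt_trans (ih (m+1) (by linarith)) (bY_step r hr m hm)

lemma bY_cross (r : ℝ) (hr : 0 < r) (m m' : ℝ) (hm : 0 ≤ m) (hm' : 0 ≤ m')
    (h : bY m' r < bY m r) :
    besselI (m'+1) r * besselI m r < besselI (m+1) r * besselI m' r := by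
  unfold bY at h
  rw [div_lt_div_iff₀ (besselI_pos m' r hm' hr) (besselI_pos m r hm hr)] at h
  nlinarith [h]

lemma alg_j (Rr a b u v c : ℝ) (ha : a ≠ 0) (hu : u ≠ 0) (hR : Rr ≠ 0)
    (hrec : Rr * a = Rr * c + 3 * b) :
    1 - 3*b/(Rr*a) - b*v/(a*u) = (c*u - b*v)/(a*u) := by
  field_simp
  linear_combination u * hrec

/-- `j_0(R) < 0`, `j_1(R) = 0`, and `0 < j_k(R) < 1` for every `k ≥ 2`. -/
theorem stmt6 (R : ℝ) (hR : 0 < R) :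
    jfun 0 R < 0 ∧ jfun 1 R = 0 ∧
    ∀ k : ℕ, 2 ≤ k → 0 < jfun k R ∧ jfun k R < 1 := by
  have ha : 0 < besselI (1/2) R := besselI_pos _ R (by norm_num) hR
  have hb : 0 < besselI (3/2) R := besselI_pos _ R (by norm_num) hR
  have hc : 0 < besselI (5/2) R := besselI_pos _ R (by norm_num) hR
  have hrec : R * besselI (1/2) R = R * besselI (5/2) R + 3 * besselI (3/2) R := by
    have h := besselI_rec (1/2) R (by norm_num) hR
    rw [show (1:ℝ)/2+2 = 5/2 by norm_num, show (1:ℝ)/2+1 = 3/2 by norm_num] at h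
    rw [h]; field_simp
  have hq0 : besselI (1/2) R * besselI (5/2) R < besselI (3/2) R * besselI (3/2) R := by
    have h := bY_step R hR (1/2) (by norm_num)
    rw [show (1:ℝ)/2+1 = 3/2 by norm_num] at h
    have h2 := bY_cross R hR (1/2) (3/2) (by norm_num) (by norm_num) h
    rw [show (3:ℝ)/2+1 = 5/2 by norm_num, show (1:ℝ)/2+1 = 3/2 by norm_num] at h2
    nlinarith [h2]
  have hj0 : jfun 0 R < 0 := by
    unfold jfun
    rw [show ((0:ℕ):ℝ)+3/2 = 3/2 by norm_num, show ((0:ℕ):ℝ)+1/2 = 1/2 by norm_num]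
    rw [alg_j R _ _ _ _ (besselI (5/2) R) (ne_of_gt ha) (ne_of_gt ha) (ne_of_gt hR) hrec]
    apply div_neg_of_neg_of_pos (by nlinarith) (by positivity)
  have hj1 : jfun 1 R = 0 := by
    unfold jfun
    rw [show ((1:ℕ):ℝ)+3/2 = 5/2 by norm_num, show ((1:ℕ):ℝ)+1/2 = 3/2 by norm_num]
    rw [alg_j R _ _ _ _ (besselI (5/2) R) (ne_of_gt ha) (ne_of_gt hb) (ne_of_gt hR) hrec]
    rw [div_eq_zero_iff]
    left; ring
  refine ⟨hj0, hj1, fun k hk => ?_⟩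
  have hu : 0 < besselI ((k:ℝ)+1/2) R := besselI_pos _ R (by positivity) hR
  have hv : 0 < besselI ((k:ℝ)+3/2) R := besselI_pos _ R (by positivity) hR
  have hqk : besselI (3/2) R * besselI ((k:ℝ)+3/2) R
      < besselI (5/2) R * besselI ((k:ℝ)+1/2) R := by
    have h := bY_chain R hR (k-2) (3/2) (by norm_num)
    have harg : (3:ℝ)/2 + ((k-2:ℕ):ℝ) + 1 = (k:ℝ)+1/2 := by
      have : ((k-2:ℕ):ℝ) = (k:ℝ) - 2 := by
        push_cast [Nat.cast_sub hk]; ring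
      rw [this]; ring
    rw [harg] at h
    have h2 := bY_cross R hR (3/2) ((k:ℝ)+1/2) (by norm_num) (by positivity) h
    rw [show (3:ℝ)/2+1 = 5/2 by norm_num, show (k:ℝ)+1/2+1 = (k:ℝ)+3/2 by ring] at h2
    nlinarith [h2]
  constructor
  · unfold jfun
    rw [alg_j R _ _ _ _ (besselI (5/2) R) (ne_of_gt ha) (ne_of_gt hu) (ne_of_gt hR) hrec]
    apply div_pos (by nlinarith) (by positivity)
  · unfold jfun
    have h1 : 0 < 3 * besselI (3/2) R / (R * besselI (1/2) R) := by positivity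
    have h2 : 0 < besselI (3/2) R * besselI ((k:ℝ)+3/2) R
        / (besselI (1/2) R * besselI ((k:ℝ)+1/2) R) := by positivity
    linarith
end

section
/- Let μ, σ̄, R > 0. For every integer k ≥ 2, h_k(R) + j_k(R) > 0 and Λ_k(γ) = (μσ̄/R)·(h_k(R) + j_k(R))·(γ − γ_k(R)) for all γ; consequently, if γ > γ*(R) := sup{γ_k(R) : k ≥ 2}, then Λ_k(γ) > 0 for every integer k ≥ 2. -/
namespace BesselAux

/-- the general term of the Bessel series -/
noncomputable def bt (m R : ℝ) (n : ℕ) : ℝ :=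
  (R / 2) ^ (m + 2 * (n : ℝ)) / ((n.factorial : ℝ) * Real.Gamma (m + (n : ℝ) + 1))

lemma besselI_eq_tsum (m R : ℝ) : besselI m R = ∑' n, bt m R n := rfl

lemma gamma_pos (m : ℝ) (hm : 0 ≤ m) (n : ℕ) : 0 < Real.Gamma (m + (n : ℝ) + 1) :=
  Real.Gamma_pos_of_pos (by positivity)

lemma gamma_fact (m : ℝ) (hm : 0 ≤ m) : ∀ n : ℕ, (n.factorial : ℝ) * Real.Gamma (m + 1) ≤ Real.Gamma (m + (n : ℝ) + 1)
  | 0 => by simp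
  | (n+1) => by
      have h1 := gamma_fact m hm n
      have h2 : Real.Gamma (m + ((n:ℝ)+1) + 1) = (m + (n:ℝ) + 1) * Real.Gamma (m + (n:ℝ) + 1) := by
        rw [show m + ((n:ℝ)+1) + 1 = (m + (n:ℝ) + 1) + 1 by ring]
        exact Real.Gamma_add_one (by positivity)
      have h3 : ((n:ℝ) + 1) ≤ (m + (n:ℝ) + 1) := by linarith
      have h4 : (0:ℝ) < Real.Gamma (m + (n:ℝ) + 1) := gamma_pos m hm n
      have h5 : ((n+1 : ℕ).factorial : ℝ) = ((n:ℝ)+1) * (n.factorial : ℝ) := by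
        push_cast [Nat.factorial_succ]; ring
      push_cast
      rw [h2, h5]
      calc ((n:ℝ)+1) * (n.factorial : ℝ) * Real.Gamma (m+1)
          = ((n:ℝ)+1) * ((n.factorial : ℝ) * Real.Gamma (m+1)) := by ring
        _ ≤ ((n:ℝ)+1) * Real.Gamma (m + (n:ℝ) + 1) := by
            apply mul_le_mul_of_nonneg_left h1 (by positivity)
        _ ≤ (m + (n:ℝ) + 1) * Real.Gamma (m + (n:ℝ) + 1) := by
            apply mul_le_mul_of_nonneg_right h3 h4.le

lemma bt_pos (m R : ℝ) (hm : 0 ≤ m) (hR : 0 < R) (n : ℕ) : 0 < bt m R n := by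
  unfold bt
  apply div_pos (Real.rpow_pos_of_pos (by linarith) _)
  exact mul_pos (by positivity) (gamma_pos m hm n)

lemma bt_eq (m R : ℝ) (hR : 0 < R) (n : ℕ) :
    bt m R n = (R/2) ^ m * ((R/2)^2)^n / ((n.factorial : ℝ) * Real.Gamma (m + (n : ℝ) + 1)) := by
  unfold bt
  rw [show m + 2 * (n:ℝ) = m + ((2*n : ℕ) : ℝ) by push_cast; ring,
    Real.rpow_add (by linarith : (0:ℝ) < R/2), Real.rpow_natCast, pow_mul]

lemma summable_bt (m R : ℝ) (hm : 0 ≤ m) (hR : 0 < R) : Summable (bt m R) := by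
  have hG1 : 0 < Real.Gamma (m + 1) := Real.Gamma_pos_of_pos (by positivity)
  apply Summable.of_nonneg_of_le (fun n => (bt_pos m R hm hR n).le)
    (f := fun n => ((R/2)^m / Real.Gamma (m+1)) * (((R/2)^2)^n / (n.factorial : ℝ)))
  · intro n
    rw [bt_eq m R hR n]
    have h1 : Real.Gamma (m+1) * (n.factorial : ℝ) ≤ (n.factorial : ℝ) * Real.Gamma (m + (n:ℝ) + 1) := by
      have := gamma_fact m hm n
      have h2 : (1:ℝ) ≤ (n.factorial : ℝ) := by exact_mod_cast Nat.one_le_iff_ne_zero.mpr n.factorial_ne_zero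
      nlinarith [gamma_pos m hm n, hG1]
    calc (R/2) ^ m * ((R/2)^2)^n / ((n.factorial : ℝ) * Real.Gamma (m + (n : ℝ) + 1))
        ≤ (R/2) ^ m * ((R/2)^2)^n / (Real.Gamma (m+1) * (n.factorial : ℝ)) := by
          apply div_le_div_of_nonneg_left (by positivity) (by positivity) h1
      _ = ((R/2)^m / Real.Gamma (m+1)) * (((R/2)^2)^n / (n.factorial : ℝ)) := by
          field_simp
  · exact (Real.summable_pow_div_factorial ((R/2)^2)).mul_left _

lemma besselI_pos (m R : ℝ) (hm : 0 ≤ m) (hR : 0 < R) : 0 < besselI m R := by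
  rw [besselI_eq_tsum]
  exact Summable.tsum_pos (summable_bt m R hm hR) (fun n => (bt_pos m R hm hR n).le) 0 (bt_pos m R hm hR 0)

end BesselAux

namespace BesselAux2
open BesselAux

lemma bt_succ_order (m R : ℝ) (hm : 0 ≤ m) (hR : 0 < R) (n : ℕ) :
    bt (m+1) R n = (R/2) / (m + (n:ℝ) + 1) * bt m R n := by
  have h1 : 0 < m + (n:ℝ) + 1 := by positivity
  unfold bt
  rw [show (m+1) + (n:ℝ) + 1 = (m + (n:ℝ) + 1) + 1 by ring,
    Real.Gamma_add_one h1.ne',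
    show (m+1) + 2*(n:ℝ) = (m + 2*(n:ℝ)) + 1 by ring,
    Real.rpow_add (by linarith : (0:ℝ) < R/2), Real.rpow_one]
  have h2 := gamma_pos m hm n
  have h3 : (0:ℝ) < (n.factorial : ℝ) := by positivity
  field_simp

lemma bt_next (m R : ℝ) (hm : 0 ≤ m) (hR : 0 < R) (n : ℕ) :
    bt m R (n+1) = (R/2)^2 / (((n:ℝ)+1) * (m + (n:ℝ) + 1)) * bt m R n := by
  have h1 : 0 < m + (n:ℝ) + 1 := by positivity
  unfold bt
  push_cast
  rw [show m + ((n:ℝ)+1) + 1 = (m + (n:ℝ) + 1) + 1 by ring,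
    Real.Gamma_add_one h1.ne',
    show m + 2*((n:ℝ)+1) = (m + 2*(n:ℝ)) + ((2:ℕ):ℝ) by push_cast; ring,
    Real.rpow_add (by linarith : (0:ℝ) < R/2), Real.rpow_natCast,
    Nat.factorial_succ]
  have h2 := gamma_pos m hm n
  have h3 : (0:ℝ) < (n.factorial : ℝ) := by positivity
  push_cast
  field_simp

lemma besselI_succ_lt_half (m R : ℝ) (hm : 0 ≤ m) (hR : 0 < R) :
    besselI (m+1) R < R/(2*(m+1)) * besselI m R := by
  rw [besselI_eq_tsum, besselI_eq_tsum, ← tsum_mul_left]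
  have hm1 : 0 ≤ m + 1 := by linarith
  refine Summable.tsum_lt_tsum_of_nonneg (i := 1) (fun n => (bt_pos (m+1) R hm1 hR n).le) ?_ ?_
    ((summable_bt m R hm hR).mul_left _)
  · intro b
    rw [bt_succ_order m R hm hR b]
    apply mul_le_mul_of_nonneg_right _ (bt_pos m R hm hR b).le
    rw [(div_div R 2 (m+1)).symm]
    apply div_le_div_of_nonneg_left (by linarith) (by linarith) (by push_cast; linarith [Nat.cast_nonneg (α := ℝ) b])
  · rw [bt_succ_order m R hm hR 1]
    apply mul_lt_mul_of_pos_right _ (bt_pos m R hm hR 1)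
    rw [(div_div R 2 (m+1)).symm]
    apply div_lt_div_of_pos_left (by linarith) (by linarith) (by push_cast; linarith)

lemma besselI_succ_lt (m R : ℝ) (hm : 0 < m) (hR : 0 < R) : besselI (m+1) R < besselI m R := by
  have hg : Summable (bt m R) := summable_bt m R hm.le hR
  have hg1 : Summable (fun n => bt m R (n+1)) := (_root_.summable_nat_add_iff 1).mpr hg
  have hG : Summable (fun n => (bt m R n + bt m R (n+1))/2) := (hg.add hg1).div_const 2
  have hstep : ∀ n : ℕ, bt (m+1) R n < (bt m R n + bt m R (n+1))/2 := by
    intro n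
    rw [bt_succ_order m R hm.le hR n, bt_next m R hm.le hR n]
    have hP := bt_pos m R hm.le hR n
    have h1 : (0:ℝ) < m + (n:ℝ) + 1 := by positivity
    have h2 : (0:ℝ) < (n:ℝ) + 1 := by positivity
    have key : (R/2)/(m+(n:ℝ)+1) < (1 + (R/2)^2/(((n:ℝ)+1)*(m+(n:ℝ)+1)))/2 := by
      rw [← sub_pos,
        show (1 + (R/2)^2/(((n:ℝ)+1)*(m+(n:ℝ)+1)))/2 - (R/2)/(m+(n:ℝ)+1)
          = (((n:ℝ)+1)*(m+(n:ℝ)+1) + (R/2)^2 - 2*(R/2)*((n:ℝ)+1))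
            / (2*(((n:ℝ)+1)*(m+(n:ℝ)+1))) from by field_simp]
      apply div_pos _ (by positivity)
      nlinarith [sq_nonneg ((n:ℝ) + 1 - R/2), mul_pos h2 hm]
    calc (R/2)/(m+(n:ℝ)+1) * bt m R n
        < ((1 + (R/2)^2/(((n:ℝ)+1)*(m+(n:ℝ)+1)))/2) * bt m R n :=
          mul_lt_mul_of_pos_right key hP
      _ = (bt m R n + (R/2)^2/(((n:ℝ)+1)*(m+(n:ℝ)+1)) * bt m R n)/2 := by ring
  calc besselI (m+1) R = ∑' n, bt (m+1) R n := besselI_eq_tsum _ _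
    _ < ∑' n, (bt m R n + bt m R (n+1))/2 :=
        Summable.tsum_lt_tsum_of_nonneg (fun n => (bt_pos (m+1) R (by linarith) hR n).le)
          (fun n => (hstep n).le) (hstep 0) hG
    _ ≤ ∑' n, bt m R n := by
        have e1 : ∑' n, (bt m R n + bt m R (n+1))/2
            = ((∑' n, bt m R n) + ∑' n, bt m R (n+1))/2 := by
          rw [tsum_div_const, Summable.tsum_add hg hg1]
        have e2 : (∑' n, bt m R n) = bt m R 0 + ∑' n, bt m R (n+1) := Summable.tsum_eq_zero_add hg
        have h0 := bt_pos m R hm.le hR 0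
        rw [e1]
        linarith
    _ = besselI m R := (besselI_eq_tsum _ _).symm

end BesselAux2

namespace BesselAux3
open BesselAux Real

lemma Gamma_nat_add_half : ∀ n : ℕ,
    Real.Gamma ((n:ℝ) + 1/2) = ((2*n).factorial : ℝ) / (4^n * (n.factorial : ℝ)) * Real.sqrt π
  | 0 => by
      rw [show ((0:ℕ):ℝ) + 1/2 = 1/2 by norm_num, Real.Gamma_one_half_eq]
      norm_num
  | (n+1) => by
      have ih := Gamma_nat_add_half n
      have h1 : (0:ℝ) < (n:ℝ) + 1/2 := by positivity
      have h2 : Real.Gamma (((n+1:ℕ):ℝ) + 1/2) = ((n:ℝ) + 1/2) * Real.Gamma ((n:ℝ) + 1/2) := by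
        rw [show ((n+1:ℕ):ℝ) + 1/2 = ((n:ℝ) + 1/2) + 1 by push_cast; ring]
        exact Real.Gamma_add_one h1.ne'
      rw [h2, ih]
      have hf1 : ((2*(n+1)).factorial : ℝ) = (2*(n:ℝ)+2) * (2*(n:ℝ)+1) * ((2*n).factorial : ℝ) := by
        rw [show 2*(n+1) = (2*n+1)+1 by ring, Nat.factorial_succ, show 2*n+1 = (2*n)+1 by ring,
          Nat.factorial_succ]
        push_cast; ring
      have hf2 : (((n+1:ℕ)).factorial : ℝ) = ((n:ℝ)+1) * (n.factorial : ℝ) := by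
        rw [Nat.factorial_succ]; push_cast; ring
      rw [hf1, hf2]
      have h3 : (0:ℝ) < (n.factorial : ℝ) := by positivity
      have h4 : (0:ℝ) < (4:ℝ)^n := by positivity
      rw [pow_succ]
      field_simp
      ring

/-- `I_{1/2}(R) = ((R/2)^{1/2}·2/√π) · sinh R / R`. -/
lemma besselI_half (R : ℝ) (hR : 0 < R) :
    besselI (1/2) R = ((R/2) ^ ((1:ℝ)/2) * 2 / Real.sqrt π) * (Real.sinh R / R) := by
  have hsum := (Real.hasSum_sinh R).mul_left ((R/2) ^ ((1:ℝ)/2) * 2 / Real.sqrt π / R)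
  have hfun : ∀ n : ℕ, ((R/2) ^ ((1:ℝ)/2) * 2 / Real.sqrt π / R) * (R ^ (2*n+1) / ((2*n+1).factorial : ℝ))
      = bt (1/2) R n := by
    intro n
    rw [bt_eq _ _ hR, show (1:ℝ)/2 + (n:ℝ) + 1 = ((n+1:ℕ):ℝ) + 1/2 by push_cast; ring,
      Gamma_nat_add_half (n+1)]
    have e1 : ((R/2)^2)^n = R^(2*n) / 4^n := by
      rw [show (R/2)^2 = R^2/4 by ring, div_pow, ← pow_mul]
    have e2 : ((2*(n+1)).factorial : ℝ) = (2*(n:ℝ)+2) * ((2*n+1).factorial : ℝ) := by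
      rw [show 2*(n+1) = (2*n+1)+1 by ring, Nat.factorial_succ]; push_cast; ring
    have e3 : (((n+1:ℕ)).factorial : ℝ) = ((n:ℝ)+1) * (n.factorial : ℝ) := by
      rw [Nat.factorial_succ]; push_cast; ring
    have e4 : R^(2*n+1) = R^(2*n) * R := by rw [pow_succ]
    rw [e1, e2, e3, e4]
    have h3 : (0:ℝ) < (n.factorial : ℝ) := by positivity
    have h4 : (0:ℝ) < ((2*n+1).factorial : ℝ) := by positivity
    have h5 : (0:ℝ) < (4:ℝ)^n := by positivity
    have h6 : 0 < Real.sqrt π := Real.sqrt_pos.mpr Real.pi_pos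
    field_simp
    ring
  have hsum2 : HasSum (bt (1/2) R) (((R/2) ^ ((1:ℝ)/2) * 2 / Real.sqrt π / R) * Real.sinh R) := by
    rw [← funext hfun]; exact hsum
  rw [besselI_eq_tsum, hsum2.tsum_eq]
  ring

/-- `I_{3/2}(R) = ((R/2)^{1/2}·2/√π) · (cosh R - sinh R / R) / R`. -/
lemma besselI_3half (R : ℝ) (hR : 0 < R) :
    besselI (3/2) R = ((R/2) ^ ((1:ℝ)/2) * 2 / Real.sqrt π) * ((Real.cosh R - Real.sinh R / R) / R) := by
  set C : ℝ := (R/2) ^ ((1:ℝ)/2) * 2 / Real.sqrt π with hC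
  have h1 : HasSum (fun n : ℕ => R^(2*n)/((2*n).factorial : ℝ)) (Real.cosh R) := Real.hasSum_cosh R
  have h2 : HasSum (fun n : ℕ => R^(2*n)/((2*n+1).factorial : ℝ)) (Real.sinh R / R) := by
    have := (Real.hasSum_sinh R).div_const R
    convert this using 2 with n
    · rfl
    rw [pow_succ]
    field_simp
  have h3 : HasSum (fun n : ℕ => R^(2*n)/((2*n).factorial : ℝ) - R^(2*n)/((2*n+1).factorial : ℝ))
      (Real.cosh R - Real.sinh R / R) := h1.sub h2
  have h4 : HasSum (fun n : ℕ => R^(2*(n+1))/((2*(n+1)).factorial : ℝ)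
        - R^(2*(n+1))/((2*(n+1)+1).factorial : ℝ))
      (Real.cosh R - Real.sinh R / R) := by
    have h5 := (hasSum_nat_add_iff'
      (f := fun n : ℕ => R^(2*n)/((2*n).factorial : ℝ) - R^(2*n)/((2*n+1).factorial : ℝ)) 1).mpr h3
    simpa using h5
  have h6 := h4.mul_left (C/R)
  have hfun : ∀ n : ℕ, (C/R) * (R^(2*(n+1))/((2*(n+1)).factorial : ℝ)
      - R^(2*(n+1))/((2*(n+1)+1).factorial : ℝ)) = bt (3/2) R n := by
    intro n
    rw [bt_eq _ _ hR, show (3:ℝ)/2 + (n:ℝ) + 1 = ((n+2:ℕ):ℝ) + 1/2 by push_cast; ring,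
      Gamma_nat_add_half (n+2),
      show (3:ℝ)/2 = 1/2 + 1 by norm_num,
      Real.rpow_add (by linarith : (0:ℝ) < R/2), Real.rpow_one]
    have e1 : ((R/2)^2)^n = R^(2*n)/4^n := by
      rw [show (R/2)^2 = R^2/4 by ring, div_pow, ← pow_mul]
    have e2 : ((2*(n+2)).factorial : ℝ)
        = (2*(n:ℝ)+4)*(2*(n:ℝ)+3)*(((2*(n+1)).factorial : ℝ)) := by
      rw [show 2*(n+2) = (2*(n+1)+1)+1 by ring, Nat.factorial_succ,
        show 2*(n+1)+1 = (2*(n+1))+1 from rfl, Nat.factorial_succ]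
      push_cast; ring
    have e2b : ((2*(n+1)+1).factorial : ℝ) = (2*(n:ℝ)+3) * ((2*(n+1)).factorial : ℝ) := by
      rw [show 2*(n+1)+1 = (2*(n+1))+1 from rfl, Nat.factorial_succ]
      push_cast; ring
    have e3 : ((n+2).factorial : ℝ) = ((n:ℝ)+2)*((n:ℝ)+1)*(n.factorial : ℝ) := by
      rw [show n+2 = (n+1)+1 from rfl, Nat.factorial_succ, Nat.factorial_succ]
      push_cast; ring
    have e4 : R^(2*(n+1)) = R^(2*n)*R^2 := by rw [show 2*(n+1) = 2*n+2 by ring, pow_add]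
    have e5 : (4:ℝ)^(n+2) = 16 * 4^n := by rw [pow_add]; ring
    rw [e1, e2, e2b, e3, e4, e5, hC]
    have p1 : (0:ℝ) < (n.factorial : ℝ) := by positivity
    have p2 : (0:ℝ) < ((2*(n+1)).factorial : ℝ) := by positivity
    have p3 : (0:ℝ) < (4:ℝ)^n := by positivity
    have p4 : 0 < Real.sqrt π := Real.sqrt_pos.mpr Real.pi_pos
    field_simp
    ring
  have hsum2 : HasSum (bt (3/2) R) ((C/R) * (Real.cosh R - Real.sinh R / R)) := by
    rw [← funext hfun]; exact h6
  rw [besselI_eq_tsum, hsum2.tsum_eq]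
  ring

end BesselAux3

namespace BesselMain
open BesselAux BesselAux2 BesselAux3

lemma tbound (R : ℝ) (hR : 0 < R) :
    (R+3) * besselI (3/2) R < (R+2) * besselI (1/2) R := by
  rw [besselI_half R hR, besselI_3half R hR]
  have hC : 0 < (R/2) ^ ((1:ℝ)/2) * 2 / Real.sqrt Real.pi :=
    div_pos (mul_pos (Real.rpow_pos_of_pos (by linarith) _) two_pos)
      (Real.sqrt_pos.mpr Real.pi_pos)
  have hXY : (R+3) * ((Real.cosh R - Real.sinh R/R)/R) < (R+2) * (Real.sinh R/R) := by
    have hE : 0 < Real.exp R := Real.exp_pos R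
    have hE0 : Real.exp R ≠ 0 := hE.ne'
    have hE2 : 1 + R + R^2/2 ≤ Real.exp R := by
      have h := Real.sum_le_exp_of_nonneg hR.le 3
      have e : ∑ i ∈ Finset.range 3, R^i/(i.factorial : ℝ) = 1 + R + R^2/2 := by
        simp [Finset.sum_range_succ]
      linarith [e ▸ h]
    have hsq : (1 + R + R^2/2)^2 ≤ (Real.exp R)^2 := by nlinarith
    rw [Real.cosh_eq, Real.sinh_eq, Real.exp_neg, ← sub_pos,
      show (R+2)*((Real.exp R - (Real.exp R)⁻¹)/2/R)
          - (R+3)*(((Real.exp R + (Real.exp R)⁻¹)/2 - (Real.exp R - (Real.exp R)⁻¹)/2/R)/R)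
        = (3*(Real.exp R)^2 - (2*R^2+6*R+3))/(2*R^2*Real.exp R) from by
          field_simp
          ring]
    apply div_pos (by nlinarith) (by positivity)
  calc (R+3) * (((R/2) ^ ((1:ℝ)/2) * 2 / Real.sqrt Real.pi) * ((Real.cosh R - Real.sinh R/R)/R))
      = ((R/2) ^ ((1:ℝ)/2) * 2 / Real.sqrt Real.pi) * ((R+3) * ((Real.cosh R - Real.sinh R/R)/R)) := by ring
    _ < ((R/2) ^ ((1:ℝ)/2) * 2 / Real.sqrt Real.pi) * ((R+2) * (Real.sinh R/R)) :=
        mul_lt_mul_of_pos_left hXY hC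
    _ = (R+2) * (((R/2) ^ ((1:ℝ)/2) * 2 / Real.sqrt Real.pi) * (Real.sinh R/R)) := by ring

end BesselMain

/-- `γ_k(R) = j_k(R)·R/(h_k(R) + j_k(R))`. -/
noncomputable def gammafun (k : ℕ) (R : ℝ) : ℝ :=
  jfun k R * R / (hfun k R + jfun k R)

/-- The eigenvalue `Λ_k(γ) = (μσ̄/R)·[γ·(h_k(R)+j_k(R)) - j_k(R)·R]`. -/
noncomputable def Lam (μ σb R γ : ℝ) (k : ℕ) : ℝ :=
  (μ * σb / R) * (γ * (hfun k R + jfun k R) - jfun k R * R)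

lemma numer_pos (A s t R : ℝ) (hA : 2 ≤ A) (hs0 : 0 < s) (hs1 : s < 1) (ht0 : 0 < t)
    (ht3 : 3*t < R) (htR : t*(R+3) < R+2) (hR : 0 < R) :
    0 < A*s + R - 3*t - t*s*R := by
  rcases le_or_gt (t*R) A with hc | hc
  · nlinarith [mul_nonneg hs0.le (sub_nonneg.mpr hc)]
  · nlinarith [mul_pos (sub_pos.mpr hs1) (sub_pos.mpr hc)]

/-- For `k ≥ 2`, `h_k + j_k > 0` and `Λ_k(γ) = (μσ̄/R)(h_k+j_k)(γ - γ_k)`;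
hence `Λ_k(γ) > 0` for all `k ≥ 2` whenever `γ > γ* = sup{γ_k : k ≥ 2}`. -/
theorem stmt11 (μ σb R : ℝ) (hμ : 0 < μ) (hσb : 0 < σb) (hR : 0 < R) :
    (∀ k : ℕ, 2 ≤ k →
      0 < hfun k R + jfun k R ∧
      ∀ γ : ℝ, Lam μ σb R γ k = (μ * σb / R) * (hfun k R + jfun k R) * (γ - gammafun k R)) ∧
    ∀ γ : ℝ, γ > sSup {x : ℝ | ∃ k : ℕ, 2 ≤ k ∧ x = gammafun k R} →
      ∀ k : ℕ, 2 ≤ k → 0 < Lam μ σb R γ k := by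
  have I1pos : 0 < besselI (1/2) R := BesselAux.besselI_pos _ _ (by norm_num) hR
  have I3pos : 0 < besselI (3/2) R := BesselAux.besselI_pos _ _ (by norm_num) hR
  have ht3 : 3 * besselI (3/2) R < R * besselI (1/2) R := by
    have h := BesselAux2.besselI_succ_lt_half (1/2) R (by norm_num) hR
    rw [show (1:ℝ)/2 + 1 = 3/2 by norm_num] at h
    norm_num at h
    rw [div_mul_eq_mul_div, lt_div_iff₀ (by norm_num : (0:ℝ) < 3)] at h
    linarith
  have htR : (R+3) * besselI (3/2) R < (R+2) * besselI (1/2) R := BesselMain.tbound R hR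
  have main : ∀ k : ℕ, 2 ≤ k → (0 < hfun k R + jfun k R) ∧ 0 ≤ hfun k R := by
    intro k hk
    have hk1 : (2:ℝ) ≤ (k:ℝ) := by exact_mod_cast hk
    have Ikpos : 0 < besselI ((k:ℝ) + 1/2) R := BesselAux.besselI_pos _ _ (by positivity) hR
    have Ik3pos : 0 < besselI ((k:ℝ) + 3/2) R := BesselAux.besselI_pos _ _ (by positivity) hR
    have hA : (2:ℝ) ≤ ((k:ℝ)^2 + (k:ℝ))/2 - 1 := by nlinarith
    have hs1 : besselI ((k:ℝ) + 3/2) R < besselI ((k:ℝ) + 1/2) R := by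
      have h := BesselAux2.besselI_succ_lt ((k:ℝ)+1/2) R (by positivity) hR
      rwa [show (k:ℝ)+1/2+1 = (k:ℝ)+3/2 by ring] at h
    have e_h : hfun k R = (((k:ℝ)^2 + (k:ℝ))/2 - 1)
        * (besselI ((k:ℝ)+3/2) R / besselI ((k:ℝ)+1/2) R) / R := by
      unfold hfun; ring
    have e_j : jfun k R = 1 - 3 * (besselI (3/2) R / besselI (1/2) R) / R
        - (besselI (3/2) R / besselI (1/2) R)
          * (besselI ((k:ℝ)+3/2) R / besselI ((k:ℝ)+1/2) R) := by
      unfold jfun; ring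
    set s := besselI ((k:ℝ)+3/2) R / besselI ((k:ℝ)+1/2) R with hsdef
    set t := besselI (3/2) R / besselI (1/2) R with htdef
    set A := ((k:ℝ)^2 + (k:ℝ))/2 - 1 with hAdef
    have hs0 : 0 < s := div_pos Ik3pos Ikpos
    have hs1' : s < 1 := (div_lt_one Ikpos).mpr hs1
    have ht0 : 0 < t := div_pos I3pos I1pos
    have ht3' : 3*t < R := by
      rw [htdef, ← mul_div_assoc, div_lt_iff₀ I1pos]
      linarith
    have htR' : t*(R+3) < R+2 := by
      rw [htdef, div_mul_eq_mul_div, div_lt_iff₀ I1pos]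
      nlinarith [htR]
    refine ⟨?_, ?_⟩
    · have heq : hfun k R + jfun k R = (A*s + R - 3*t - t*s*R)/R := by
        rw [e_h, e_j]
        field_simp
        ring
      rw [heq]
      apply div_pos _ hR
      exact numer_pos A s t R hA hs0 hs1' ht0 ht3' htR' hR
    · rw [e_h]
      have : 0 ≤ A * s := mul_nonneg (by linarith) hs0.le
      positivity
  have iden : ∀ k : ℕ, 2 ≤ k → ∀ γ : ℝ,
      Lam μ σb R γ k = (μ*σb/R) * (hfun k R + jfun k R) * (γ - gammafun k R) := by
    intro k hk γ
    have hne : hfun k R + jfun k R ≠ 0 := (main k hk).1.ne'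
    unfold Lam gammafun
    field_simp
  refine ⟨fun k hk => ⟨(main k hk).1, iden k hk⟩, ?_⟩
  intro γ hγ k hk
  have hbdd : BddAbove {x : ℝ | ∃ k : ℕ, 2 ≤ k ∧ x = gammafun k R} := by
    refine ⟨R, ?_⟩
    rintro x ⟨k', hk', rfl⟩
    have h1 := (main k' hk').1
    have h2 := (main k' hk').2
    show gammafun k' R ≤ R
    unfold gammafun
    rw [div_le_iff₀ h1]
    nlinarith
  have hmem : gammafun k R ≤ sSup {x : ℝ | ∃ k : ℕ, 2 ≤ k ∧ x = gammafun k R} :=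
    le_csSup hbdd ⟨k, hk, rfl⟩
  rw [iden k hk γ]
  exact mul_pos (mul_pos (div_pos (mul_pos hμ hσb) hR) (main k hk).1) (by linarith)
end
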